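/- The operator A is densely defined, and its Hilbert-space adjoint is exactly the operator with domain D* and action A*: for g, h ∈ L²(ℝ), one has ⟨Af, g⟩ = ⟨f, h⟩ for all f ∈ D(A) if and only if g ∈ D* and h = A*g, where A*g = (x ↦ x g(x) − c_g) + ⟨g, ψ⟩φ. -/

import Mathlib

open MeasureTheory Filter

/-- The (paper-convention) `L²(ℝ)` inner product `⟨f,g⟩ = ∫ f · conj g`,
linear in the first argument. -/
noncomputable def ip (f g : ℝ → ℂ) : ℂ :=
  ∫ x : ℝ, f x * (starRingEnd ℂ) (g x)

/-- The boundary operator `Γ₁`, evaluated on `g ∈ D*` with associated constant `c = c_g`: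
`Γ₁ g = ∫_ℝ ( g(x) − c·sign(x)·(x²+1)^{−1/2} ) dx`. -/
noncomputable def Gam1 (g : ℝ → ℂ) (c : ℂ) : ℂ :=
  ∫ x : ℝ, (g x - c * ((Real.sign x : ℝ) : ℂ) * (((Real.sqrt (x ^ 2 + 1) : ℝ) : ℂ))⁻¹)

/-- The domain `D(A)` of the Friedrichs-model minimal operator. -/
def DomA : Set (Lp ℂ 2 (volume : Measure ℝ)) :=
  {f | MemLp (fun x : ℝ => (x : ℂ) * f x) 2 (volume : Measure ℝ) ∧
    Tendsto (fun R : ℝ => ∫ x in (-R)..R, f x) atTop (nhds 0)}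


open scoped ENNReal NNReal

noncomputable def ind (a b : ℝ) : ℝ → ℂ := Set.indicator (Set.Ioc a b) (fun _ => (1 : ℂ))

-- from t1.lean
lemma memL2_conj {g : ℝ → ℂ} (hg : MemLp g 2 (volume : Measure ℝ)) :
    MemLp (fun x => (starRingEnd ℂ) (g x)) 2 (volume : Measure ℝ) :=
  hg.of_le_mul (RCLike.continuous_conj.comp_aestronglyMeasurable hg.1)
    (Eventually.of_forall fun x => by rw [RCLike.norm_conj, one_mul])

lemma integrable_mul_L2 {f g : ℝ → ℂ} (hf : MemLp f 2 (volume : Measure ℝ))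
    (hg : MemLp g 2 (volume : Measure ℝ)) :
    Integrable (fun x => f x * g x) (volume : Measure ℝ) := by
  have h1 : Integrable (fun x => ‖f x‖ ^ 2) volume :=
    (memLp_two_iff_integrable_sq_norm hf.1).mp hf
  have h2 : Integrable (fun x => ‖g x‖ ^ 2) volume :=
    (memLp_two_iff_integrable_sq_norm hg.1).mp hg
  refine (h1.add h2).mono' (hf.1.mul hg.1) (Eventually.of_forall fun x => ?_)
  have := norm_nonneg (f x); have := norm_nonneg (g x)
  simp only [Pi.add_apply, norm_mul]
  nlinarith [sq_nonneg (‖f x‖ - ‖g x‖)]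

-- from t2.lean
lemma toLp_mem_domA {q : ℝ → ℂ} (hq2 : MemLp q 2 (volume : Measure ℝ))
    (hxq : MemLp (fun x : ℝ => (x : ℂ) * q x) 2 (volume : Measure ℝ))
    (hqi : Integrable q (volume : Measure ℝ)) (hq0 : ∫ x : ℝ, q x = 0) :
    hq2.toLp q ∈ DomA := by
  have hco : ⇑(hq2.toLp q) =ᵐ[(volume : Measure ℝ)] q := hq2.coeFn_toLp
  constructor
  · have hae : (fun x : ℝ => (x : ℂ) * q x) =ᵐ[(volume : Measure ℝ)]
        (fun x : ℝ => (x : ℂ) * (hq2.toLp q) x) := hco.mono fun x hx => by dsimp only; rw [hx]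
    exact hxq.ae_eq hae
  · have h1 : Tendsto (fun R : ℝ => ∫ x in (-R)..R, q x) atTop (nhds 0) := by
      rw [← hq0]
      exact intervalIntegral_tendsto_integral hqi tendsto_neg_atTop_atBot tendsto_id
    refine h1.congr fun R => ?_
    exact intervalIntegral.integral_congr_ae
      ((hco.symm.mono fun x hx => fun _ => hx))

-- from t3.lean
lemma ae_zero_of_intervals {W : ℝ → ℂ} (hW : LocallyIntegrable W (volume : Measure ℝ))
    (h : ∀ a b : ℝ, a ≤ b → ∫ x in Set.Ioc a b, W x = 0) :
    W =ᵐ[(volume : Measure ℝ)] 0 := by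
  have hv := (Besicovitch.vitaliFamily (volume : Measure ℝ)).ae_tendsto_average hW
  filter_upwards [hv] with x hx
  have ht : Tendsto (fun r : ℝ => ⨍ y in Metric.closedBall x r, W y) (nhdsWithin 0 (Set.Ioi 0))
      (nhds (W x)) := hx.comp (Besicovitch.tendsto_filterAt _ x)
  have heq : ∀ᶠ r in nhdsWithin (0:ℝ) (Set.Ioi 0),
      (⨍ y in Metric.closedBall x r, W y) = 0 := by
    filter_upwards [self_mem_nhdsWithin] with r hr
    have h0 : ∫ y in Metric.closedBall x r, W y = 0 := by
      rw [Real.closedBall_eq_Icc, MeasureTheory.integral_Icc_eq_integral_Ioc]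
      exact h (x - r) (x + r) (by simp at hr; linarith)
    rw [setAverage_eq, h0, smul_zero]
  have h2 : Tendsto (fun r : ℝ => ⨍ y in Metric.closedBall x r, W y)
      (nhdsWithin 0 (Set.Ioi 0)) (nhds 0) := Tendsto.congr' (heq.mono fun r hr => hr.symm) tendsto_const_nhds
  exact tendsto_nhds_unique ht h2

-- from t7.lean
lemma ind_memL2 (a b : ℝ) : MemLp (ind a b) 2 (volume : Measure ℝ) :=
  memLp_indicator_const 2 measurableSet_Ioc 1 (Or.inr measure_Ioc_lt_top.ne)

lemma ind_meas (a b : ℝ) : Measurable (ind a b) :=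
  measurable_const.indicator measurableSet_Ioc

lemma ind_x_memL2 (a b : ℝ) :
    MemLp (fun x : ℝ => (x : ℂ) * ind a b x) 2 (volume : Measure ℝ) := by
  refine (ind_memL2 a b).of_le_mul (c := max |a| |b|)
    ((Complex.measurable_ofReal.mul (ind_meas a b)).aestronglyMeasurable)
    (Eventually.of_forall fun x => ?_)
  by_cases hx : x ∈ Set.Ioc a b
  · rw [norm_mul, Complex.norm_real]
    have hxb : ‖x‖ ≤ max |a| |b| := by
      rw [Real.norm_eq_abs, abs_le]
      exact ⟨by have := neg_abs_le a; have := le_max_left |a| |b|; linarith [hx.1.le],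
        by have := le_abs_self b; have := le_max_right |a| |b|; linarith [hx.2]⟩
    exact mul_le_mul_of_nonneg_right hxb (norm_nonneg _)
  · simp [ind, Set.indicator_of_notMem hx]

lemma ind_integrable (a b : ℝ) : Integrable (ind a b) (volume : Measure ℝ) :=
  (integrable_indicator_iff measurableSet_Ioc).mpr
    (integrableOn_const measure_Ioc_lt_top.ne)

lemma ind_integral {a b : ℝ} (hab : a ≤ b) : ∫ x : ℝ, ind a b x = ((b - a : ℝ) : ℂ) := by
  rw [ind, integral_indicator_const (1 : ℂ) measurableSet_Ioc, Real.volume_real_Ioc_of_le hab,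
    Complex.real_smul, mul_one]

lemma ind_mul_eq (a b : ℝ) (W : ℝ → ℂ) :
    (fun x : ℝ => ind a b x * W x) = Set.indicator (Set.Ioc a b) W := by
  funext x
  by_cases hx : x ∈ Set.Ioc a b
  · simp [ind, Set.indicator_of_mem hx]
  · simp [ind, Set.indicator_of_notMem hx]

-- from t6.lean
-- integrability of L² function on a bounded interval
lemma integrableOn_of_L2 {u : ℝ → ℂ} (hu : MemLp u 2 (volume : Measure ℝ)) (a b : ℝ) :
    IntegrableOn u (Set.Ioc a b) (volume : Measure ℝ) := by
  haveI : IsFiniteMeasure ((volume : Measure ℝ).restrict (Set.Ioc a b)) :=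
    ⟨by rw [Measure.restrict_apply_univ]; exact measure_Ioc_lt_top⟩
  exact memLp_one_iff_integrable.mp
    (MemLp.mono_exponent (hu.restrict (Set.Ioc a b)) one_le_two)

lemma integrableOn_x_mul_L2 {u : ℝ → ℂ} (hu : MemLp u 2 (volume : Measure ℝ)) (a b : ℝ) :
    IntegrableOn (fun x : ℝ => (x : ℂ) * u x) (Set.Ioc a b) (volume : Measure ℝ) := by
  have hbase := (integrableOn_of_L2 hu a b).norm.const_mul (max |a| |b|)
  refine Integrable.mono' hbase
    ((Complex.measurable_ofReal.aestronglyMeasurable.restrict).mul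
      (hu.1.restrict)) ?_
  filter_upwards [ae_restrict_mem measurableSet_Ioc] with x hx
  rw [norm_mul, Complex.norm_real]
  have hxb : ‖x‖ ≤ max |a| |b| := by
    rw [Real.norm_eq_abs, abs_le]
    constructor
    · calc -(max |a| |b|) ≤ -|a| := by simp
        _ ≤ a := neg_abs_le a
        _ ≤ x := hx.1.le
    · calc x ≤ b := hx.2
        _ ≤ |b| := le_abs_self b
        _ ≤ max |a| |b| := le_max_right _ _
  exact mul_le_mul_of_nonneg_right hxb (norm_nonneg _)

lemma integrableOn_W {u v w : ℝ → ℂ} (hu : MemLp u 2 (volume : Measure ℝ))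
    (hv : MemLp v 2 (volume : Measure ℝ)) (hw : MemLp w 2 (volume : Measure ℝ))
    (β : ℂ) (a b : ℝ) :
    IntegrableOn (fun x : ℝ => (x : ℂ) * u x + β * v x - w x) (Set.Ioc a b)
      (volume : Measure ℝ) :=
  ((integrableOn_x_mul_L2 hu a b).add ((integrableOn_of_L2 hv a b).const_mul β)).sub
    (integrableOn_of_L2 hw a b)

lemma locallyIntegrable_W {u v w : ℝ → ℂ} (hu : MemLp u 2 (volume : Measure ℝ))
    (hv : MemLp v 2 (volume : Measure ℝ)) (hw : MemLp w 2 (volume : Measure ℝ)) (β : ℂ) :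
    LocallyIntegrable (fun x : ℝ => (x : ℂ) * u x + β * v x - w x) (volume : Measure ℝ) := by
  rw [locallyIntegrable_iff]
  intro K hK
  obtain ⟨r, hr⟩ := hK.isBounded.subset_ball 0
  refine (integrableOn_W hu hv hw β (-r) r).mono_set (hr.trans ?_)
  intro x hx
  simp only [Metric.mem_ball, Real.dist_eq, sub_zero] at hx
  exact ⟨by cases abs_lt.mp hx; linarith, by cases abs_lt.mp hx; linarith⟩

-- from t5.lean
lemma test_integral (φ ψ : ℝ → ℂ)
    (hφ : MemLp φ 2 (volume : Measure ℝ)) (hψ : MemLp ψ 2 (volume : Measure ℝ))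
    (g h : Lp ℂ 2 (volume : Measure ℝ))
    (H : ∀ f ∈ DomA,
      ip (fun x : ℝ => (x : ℂ) * f x + ip (⇑f) φ * ψ x) (⇑g) = ip (⇑f) (⇑h))
    {q : ℝ → ℂ} (hq2 : MemLp q 2 (volume : Measure ℝ))
    (hxq : MemLp (fun x : ℝ => (x : ℂ) * q x) 2 (volume : Measure ℝ))
    (hqi : Integrable q (volume : Measure ℝ)) (hq0 : ∫ x : ℝ, q x = 0) :
    ∫ x : ℝ, q x * ((x : ℂ) * (starRingEnd ℂ) (g x)
      + ip ψ (⇑g) * (starRingEnd ℂ) (φ x) - (starRingEnd ℂ) (h x)) = 0 := by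
  have hgL : MemLp (⇑g) 2 (volume : Measure ℝ) := Lp.memLp g
  have hhL : MemLp (⇑h) 2 (volume : Measure ℝ) := Lp.memLp h
  set f := hq2.toLp q with hfdef
  have hco : ⇑f =ᵐ[(volume : Measure ℝ)] q := hq2.coeFn_toLp
  have E := H f (toLp_mem_domA hq2 hxq hqi hq0)
  set β := ip ψ (⇑g) with hβ
  have hα : ip (⇑f) φ = ∫ x : ℝ, q x * (starRingEnd ℂ) (φ x) := by
    rw [ip]; exact integral_congr_ae (hco.mono fun x hx => by dsimp only; rw [hx])
  set α := ∫ x : ℝ, q x * (starRingEnd ℂ) (φ x) with hαdef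
  -- integrable pieces
  have I1 : Integrable (fun x : ℝ => ((x : ℂ) * q x) * (starRingEnd ℂ) (g x)) volume :=
    integrable_mul_L2 hxq (memL2_conj hgL)
  have I2 : Integrable (fun x : ℝ => ψ x * (starRingEnd ℂ) (g x)) volume :=
    integrable_mul_L2 hψ (memL2_conj hgL)
  have I3 : Integrable (fun x : ℝ => q x * (starRingEnd ℂ) (h x)) volume :=
    integrable_mul_L2 hq2 (memL2_conj hhL)
  have I4 : Integrable (fun x : ℝ => q x * (starRingEnd ℂ) (φ x)) volume :=
    integrable_mul_L2 hq2 (memL2_conj hφ)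
  -- rewrite E
  have hLHS : ip (fun x : ℝ => (x : ℂ) * f x + ip (⇑f) φ * ψ x) (⇑g)
      = (∫ x : ℝ, ((x : ℂ) * q x) * (starRingEnd ℂ) (g x))
        + α * ∫ x : ℝ, ψ x * (starRingEnd ℂ) (g x) := by
    rw [ip, hα]
    have hcongr : (fun x : ℝ => ((x : ℂ) * f x + α * ψ x) * (starRingEnd ℂ) (g x))
        =ᵐ[volume] fun x : ℝ => ((x : ℂ) * q x) * (starRingEnd ℂ) (g x)
          + α * (ψ x * (starRingEnd ℂ) (g x)) := by
      filter_upwards [hco] with x hx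
      rw [show (⇑f : ℝ → ℂ) x = q x from hx]; ring
    rw [integral_congr_ae hcongr, integral_add I1 (I2.const_mul α), integral_const_mul]
  have hRHS : ip (⇑f) (⇑h) = ∫ x : ℝ, q x * (starRingEnd ℂ) (h x) := by
    rw [ip]; exact integral_congr_ae (hco.mono fun x hx => by dsimp only; rw [hx])
  rw [hLHS, hRHS] at E
  -- conclude
  have hsplit : ∫ x : ℝ, q x * ((x : ℂ) * (starRingEnd ℂ) (g x)
      + β * (starRingEnd ℂ) (φ x) - (starRingEnd ℂ) (h x))
      = (∫ x : ℝ, ((x : ℂ) * q x) * (starRingEnd ℂ) (g x))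
        + β * (∫ x : ℝ, q x * (starRingEnd ℂ) (φ x))
        - ∫ x : ℝ, q x * (starRingEnd ℂ) (h x) := by
    have hcongr : (fun x : ℝ => q x * ((x : ℂ) * (starRingEnd ℂ) (g x)
        + β * (starRingEnd ℂ) (φ x) - (starRingEnd ℂ) (h x)))
        =ᵐ[volume] fun x : ℝ => (((x : ℂ) * q x) * (starRingEnd ℂ) (g x)
          + β * (q x * (starRingEnd ℂ) (φ x))) - q x * (starRingEnd ℂ) (h x) :=
      Eventually.of_forall fun x => by ring
    have IA : Integrable (fun x : ℝ => ((x : ℂ) * q x) * (starRingEnd ℂ) (g x)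
        + β * (q x * (starRingEnd ℂ) (φ x))) volume := I1.add (I4.const_mul β)
    rw [integral_congr_ae hcongr, integral_sub IA I3,
      integral_add I1 (I4.const_mul β), integral_const_mul]
  rw [hsplit, ← hαdef]
  have hb : β * α = α * ∫ x : ℝ, ψ x * (starRingEnd ℂ) (g x) := by
    rw [hβ, ip]; ring
  rw [hb, E]; ring

-- from t4.lean
lemma conj_ip (f g : ℝ → ℂ) : (starRingEnd ℂ) (ip f g) = ip g f := by
  rw [ip, ip, ← integral_conj]
  exact integral_congr_ae (Eventually.of_forall fun x => by simp [mul_comm])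

lemma backward (φ ψ : ℝ → ℂ)
    (hφ : MemLp φ 2 (volume : Measure ℝ)) (hψ : MemLp ψ 2 (volume : Measure ℝ))
    (g h : Lp ℂ 2 (volume : Measure ℝ)) (c : ℂ)
    (hc : MemLp (fun x : ℝ => (x : ℂ) * g x - c) 2 (volume : Measure ℝ))
    (hh : (h : ℝ → ℂ) =ᵐ[(volume : Measure ℝ)]
      fun x : ℝ => ((x : ℂ) * g x - c) + ip (⇑g) ψ * φ x)
    (f : Lp ℂ 2 (volume : Measure ℝ)) (hf : f ∈ DomA) :
    ip (fun x : ℝ => (x : ℂ) * f x + ip (⇑f) φ * ψ x) (⇑g) = ip (⇑f) (⇑h) := by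
  obtain ⟨hf1, hf2⟩ := hf
  have hgL : MemLp (⇑g) 2 (volume : Measure ℝ) := Lp.memLp g
  have hfL : MemLp (⇑f) 2 (volume : Measure ℝ) := Lp.memLp f
  set α := ip (⇑f) φ with hα
  set β := ip ψ (⇑g) with hβ
  -- integrable pieces
  have I1 : Integrable (fun x : ℝ => ((x : ℂ) * f x) * (starRingEnd ℂ) (g x)) volume :=
    integrable_mul_L2 hf1 (memL2_conj hgL)
  have I2 : Integrable (fun x : ℝ => ψ x * (starRingEnd ℂ) (g x)) volume :=
    integrable_mul_L2 hψ (memL2_conj hgL)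
  have I3 : Integrable (fun x : ℝ => f x * (starRingEnd ℂ) ((x : ℂ) * g x - c)) volume :=
    integrable_mul_L2 hfL (memL2_conj hc)
  have I4 : Integrable (fun x : ℝ => f x * (starRingEnd ℂ) (φ x)) volume :=
    integrable_mul_L2 hfL (memL2_conj hφ)
  -- the constant-term integral vanishes
  have Ic : Integrable (fun x : ℝ => f x * (starRingEnd ℂ) c) volume := by
    have := I1.sub I3
    refine this.congr (Eventually.of_forall fun x => ?_)
    simp only [Pi.sub_apply, map_sub, map_mul, Complex.conj_ofReal]
    ring
  have hczero : ∫ x : ℝ, f x * (starRingEnd ℂ) c = 0 := by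
    rcases eq_or_ne c 0 with rfl | hcne
    · simp
    · have hfi : Integrable (⇑f) volume := by
        have := Ic.const_mul (((starRingEnd ℂ) c)⁻¹)
        refine this.congr (Eventually.of_forall fun x => ?_)
        have hc0 : (starRingEnd ℂ) c ≠ 0 := by simpa using hcne
        field_simp
      have h1 : Tendsto (fun R : ℝ => ∫ x in (-R)..R, f x) atTop (nhds (∫ x : ℝ, f x)) :=
        intervalIntegral_tendsto_integral hfi tendsto_neg_atTop_atBot tendsto_id
      have h2 : (∫ x : ℝ, f x) = 0 := tendsto_nhds_unique h1 hf2
      rw [integral_mul_const, h2, zero_mul]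
  -- main computation
  rw [ip, ip]
  have hsplit : ∫ x : ℝ, ((x : ℂ) * f x + α * ψ x) * (starRingEnd ℂ) (g x)
      = (∫ x : ℝ, ((x : ℂ) * f x) * (starRingEnd ℂ) (g x)) + α * ∫ x : ℝ, ψ x * (starRingEnd ℂ) (g x) := by
    rw [← integral_const_mul, ← integral_add I1 (I2.const_mul α)]
    exact integral_congr_ae (Eventually.of_forall fun x => by ring)
  rw [hsplit]
  have hrhs : ∫ x : ℝ, f x * (starRingEnd ℂ) (h x)
      = (∫ x : ℝ, f x * (starRingEnd ℂ) ((x : ℂ) * g x - c)) + β * ∫ x : ℝ, f x * (starRingEnd ℂ) (φ x) := by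
    have hcongr : (fun x : ℝ => f x * (starRingEnd ℂ) (h x)) =ᵐ[volume]
        fun x : ℝ => f x * (starRingEnd ℂ) ((x : ℂ) * g x - c) + β * (f x * (starRingEnd ℂ) (φ x)) := by
      filter_upwards [hh] with x hx
      rw [hx]
      have hb : (starRingEnd ℂ) (ip (⇑g) ψ) = β := by rw [conj_ip]
      simp only [map_add, map_mul, ← hb]
      ring
    rw [integral_congr_ae hcongr, integral_add I3 ((I4).const_mul β), integral_const_mul]
  rw [hrhs]
  have hmid : ∫ x : ℝ, ((x : ℂ) * f x) * (starRingEnd ℂ) (g x)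
      = ∫ x : ℝ, f x * (starRingEnd ℂ) ((x : ℂ) * g x - c) := by
    have : ∫ x : ℝ, (((x : ℂ) * f x) * (starRingEnd ℂ) (g x) - f x * (starRingEnd ℂ) ((x : ℂ) * g x - c)) = 0 := by
      have hcongr : (fun x : ℝ => ((x : ℂ) * f x) * (starRingEnd ℂ) (g x) - f x * (starRingEnd ℂ) ((x : ℂ) * g x - c))
          =ᵐ[volume] fun x : ℝ => f x * (starRingEnd ℂ) c :=
        Eventually.of_forall fun x => by
          simp only [map_sub, map_mul, Complex.conj_ofReal]; ring
      rw [integral_congr_ae hcongr, hczero]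
    rw [integral_sub I1 I3] at this
    exact sub_eq_zero.mp this
  rw [hmid]
  simp only [hα, hβ, ip]
  ring

-- from t8.lean
lemma forward (φ ψ : ℝ → ℂ)
    (hφ : MemLp φ 2 (volume : Measure ℝ)) (hψ : MemLp ψ 2 (volume : Measure ℝ))
    (g h : Lp ℂ 2 (volume : Measure ℝ))
    (H : ∀ f ∈ DomA,
      ip (fun x : ℝ => (x : ℂ) * f x + ip (⇑f) φ * ψ x) (⇑g) = ip (⇑f) (⇑h)) :
    ∃ c : ℂ, MemLp (fun x : ℝ => (x : ℂ) * g x - c) 2 (volume : Measure ℝ) ∧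
      (h : ℝ → ℂ) =ᵐ[(volume : Measure ℝ)]
        fun x : ℝ => ((x : ℂ) * g x - c) + ip (⇑g) ψ * φ x := by
  set β := ip ψ (⇑g) with hβ
  set W : ℝ → ℂ := fun x => (x : ℂ) * (starRingEnd ℂ) (g x)
    + β * (starRingEnd ℂ) (φ x) - (starRingEnd ℂ) (h x) with hW
  have hgc := memL2_conj (Lp.memLp g)
  have hφc := memL2_conj hφ
  have hhc := memL2_conj (Lp.memLp h)
  have hWloc : LocallyIntegrable W volume := locallyIntegrable_W hgc hφc hhc β
  have hIoc : ∀ a b : ℝ, IntegrableOn W (Set.Ioc a b) volume :=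
    fun a b => integrableOn_W hgc hφc hhc β a b
  have key : ∀ a b : ℝ, a ≤ b →
      ∫ x in Set.Ioc a b, W x = ((b - a : ℝ) : ℂ) * ∫ x in Set.Ioc (0:ℝ) 1, W x := by
    intro a b hab
    set q : ℝ → ℂ := fun x => ind a b x - ((b - a : ℝ) : ℂ) * ind 0 1 x with hq
    have hq2 : MemLp q 2 volume := (ind_memL2 a b).sub ((ind_memL2 0 1).const_mul _)
    have hxq : MemLp (fun x : ℝ => (x : ℂ) * q x) 2 volume := by
      have h1 := (ind_x_memL2 a b).sub ((ind_x_memL2 0 1).const_mul ((b - a : ℝ) : ℂ))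
      exact h1.ae_eq (Eventually.of_forall fun x => by simp only [hq, Pi.sub_apply]; ring)
    have hqi : Integrable q volume :=
      (ind_integrable a b).sub ((ind_integrable 0 1).const_mul _)
    have hq0 : ∫ x : ℝ, q x = 0 := by
      rw [hq]
      rw [integral_sub (ind_integrable a b) ((ind_integrable 0 1).const_mul _),
        integral_const_mul, ind_integral hab, ind_integral (zero_le_one)]
      norm_num
    have T := test_integral φ ψ hφ hψ g h H hq2 hxq hqi hq0
    have e1 : Integrable (fun x : ℝ => ind a b x * W x) volume := by
      rw [ind_mul_eq]
      exact (integrable_indicator_iff measurableSet_Ioc).mpr (hIoc a b)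
    have e2 : Integrable (fun x : ℝ => ind 0 1 x * W x) volume := by
      rw [ind_mul_eq]
      exact (integrable_indicator_iff measurableSet_Ioc).mpr (hIoc 0 1)
    have hsplit : ∫ x : ℝ, q x * W x
        = (∫ x : ℝ, ind a b x * W x) - ((b - a : ℝ) : ℂ) * ∫ x : ℝ, ind 0 1 x * W x := by
      have hcongr : (fun x : ℝ => q x * W x) =ᵐ[volume]
          fun x : ℝ => ind a b x * W x - ((b - a : ℝ) : ℂ) * (ind 0 1 x * W x) :=
        Eventually.of_forall fun x => by simp only [hq]; ring
      rw [integral_congr_ae hcongr, integral_sub e1 (e2.const_mul _), integral_const_mul]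
    have hT' : ∫ x : ℝ, q x * W x = 0 := by
      rw [← T]
    rw [hT'] at hsplit
    have hind1 : ∫ x : ℝ, ind a b x * W x = ∫ x in Set.Ioc a b, W x := by
      rw [ind_mul_eq, integral_indicator measurableSet_Ioc]
    have hind2 : ∫ x : ℝ, ind 0 1 x * W x = ∫ x in Set.Ioc (0:ℝ) 1, W x := by
      rw [ind_mul_eq, integral_indicator measurableSet_Ioc]
    rw [hind1, hind2] at hsplit
    linear_combination -hsplit
  set k := ∫ x in Set.Ioc (0:ℝ) 1, W x with hk
  have hW0 : (fun x : ℝ => W x - k) =ᵐ[(volume : Measure ℝ)] 0 := by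
    apply ae_zero_of_intervals (hWloc.sub (locallyIntegrable_const k))
    intro a b hab
    simp only [Pi.sub_apply]
    rw [integral_sub (hIoc a b) (integrableOn_const measure_Ioc_lt_top.ne),
      key a b hab, setIntegral_const, Real.volume_real_Ioc_of_le hab,
      Complex.real_smul]
    ring
  have hWk : ∀ᵐ x ∂(volume : Measure ℝ), W x = k :=
    hW0.mono fun x hx => by simpa [sub_eq_zero] using hx
  have hae : ∀ᵐ x : ℝ ∂(volume : Measure ℝ),
      (x : ℂ) * g x - (starRingEnd ℂ) k = h x - ip (⇑g) ψ * φ x := by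
    filter_upwards [hWk] with x hx
    simp only [hW] at hx
    have h2 := congrArg (starRingEnd ℂ) hx
    simp only [map_sub, map_add, map_mul, Complex.conj_ofReal, Complex.conj_conj] at h2
    rw [hβ, conj_ip] at h2
    linear_combination h2
  refine ⟨(starRingEnd ℂ) k, ?_, ?_⟩
  · have h1 : MemLp (⇑h - fun x : ℝ => ip (⇑g) ψ * φ x) 2 (volume : Measure ℝ) :=
      (Lp.memLp h).sub (hφ.const_mul _)
    exact h1.ae_eq (hae.mono fun x hx => by
      simp only [Pi.sub_apply]; linear_combination -hx)
  · filter_upwards [hae] with x hx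
    linear_combination -hx

-- from t9.lean
lemma dense_domA : Dense DomA := by
  intro F
  rw [Metric.mem_closure_iff]
  intro r hr
  obtain ⟨u, hu_supp, hu_close, hu_cont, hu_mem⟩ :=
    (Lp.memLp F).exists_hasCompactSupport_eLpNorm_sub_le (p := 2) (by norm_num)
      (ε := ENNReal.ofReal (r / 4)) (by simp only [ne_eq, ENNReal.ofReal_eq_zero, not_le]; linarith)
  have hui : Integrable u volume := hu_cont.integrable_of_hasCompactSupport hu_supp
  set m := ∫ x : ℝ, u x with hm
  set L : ℝ := max 1 ((4 * ‖m‖ / r) ^ 2) with hL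
  have hL1 : (1 : ℝ) ≤ L := le_max_left _ _
  have hL0 : (0 : ℝ) < L := lt_of_lt_of_le one_pos hL1
  have hLne : ((L : ℝ) : ℂ) ≠ 0 := by
    simp only [ne_eq, Complex.ofReal_eq_zero]; linarith
  set q : ℝ → ℂ := fun x => u x - (m / (L : ℂ)) * ind 0 L x with hq
  have hq2 : MemLp q 2 (volume : Measure ℝ) := hu_mem.sub ((ind_memL2 0 L).const_mul _)
  have hxu : MemLp (fun x : ℝ => (x : ℂ) * u x) 2 (volume : Measure ℝ) :=
    (Complex.continuous_ofReal.mul hu_cont).memLp_of_hasCompactSupport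
      (hu_supp.mul_left)
  have hxq : MemLp (fun x : ℝ => (x : ℂ) * q x) 2 (volume : Measure ℝ) := by
    have h1 := hxu.sub ((ind_x_memL2 0 L).const_mul (m / (L : ℂ)))
    exact h1.ae_eq (Eventually.of_forall fun x => by simp only [hq, Pi.sub_apply]; ring)
  have hqi : Integrable q volume := hui.sub ((ind_integrable 0 L).const_mul _)
  have hq0 : ∫ x : ℝ, q x = 0 := by
    rw [hq, integral_sub hui ((ind_integrable 0 L).const_mul _), integral_const_mul,
      ind_integral hL0.le, ← hm]
    simp only [sub_zero]; field_simp; ring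
  refine ⟨hq2.toLp q, toLp_mem_domA hq2 hxq hqi hq0, ?_⟩
  -- distance estimate
  set uL := hu_mem.toLp u with huL
  have d1 : dist F (hu_mem.toLp u) ≤ r / 4 := by
    rw [Lp.dist_def]
    have : eLpNorm (⇑F - ⇑(hu_mem.toLp u)) 2 volume = eLpNorm (⇑F - u) 2 volume :=
      eLpNorm_congr_ae ((EventuallyEq.refl _ _).sub hu_mem.coeFn_toLp)
    rw [this]
    calc (eLpNorm (⇑F - u) 2 volume).toReal ≤ (ENNReal.ofReal (r / 4)).toReal :=
          ENNReal.toReal_mono ENNReal.ofReal_ne_top hu_close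
      _ = r / 4 := ENNReal.toReal_ofReal (by linarith)
  have d2 : dist (hu_mem.toLp u) (hq2.toLp q) ≤ r / 4 := by
    rw [Lp.dist_def]
    have h1 : eLpNorm (⇑(hu_mem.toLp u) - ⇑(hq2.toLp q)) 2 volume
        = eLpNorm (Set.indicator (Set.Ioc (0:ℝ) L) (fun _ => m / (L : ℂ))) 2 volume := by
      apply eLpNorm_congr_ae
      filter_upwards [hu_mem.coeFn_toLp, hq2.coeFn_toLp] with x h1 h2
      rw [Pi.sub_apply, h1, h2]; simp only [hq]
      by_cases hx : x ∈ Set.Ioc (0:ℝ) L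
      · simp [ind, Set.indicator_of_mem hx]
      · simp [ind, Set.indicator_of_notMem hx]
    rw [h1, eLpNorm_indicator_const measurableSet_Ioc two_ne_zero ENNReal.ofNat_ne_top]
    rw [Real.volume_Ioc, sub_zero]
    have hexp : (1 / (2:ℝ≥0∞).toReal) = ((1:ℝ)/2) := by norm_num [ENNReal.toReal_ofNat]
    rw [hexp]
    have htoReal : (‖m / (L : ℂ)‖ₑ * ENNReal.ofReal L ^ ((1:ℝ)/2)).toReal
        = ‖m / (L : ℂ)‖ * L ^ ((1:ℝ)/2) := by
      rw [ENNReal.toReal_mul, ← ENNReal.toReal_rpow, ENNReal.toReal_ofReal hL0.le,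
        toReal_enorm]
    rw [htoReal]
    -- now a real inequality
    have hnorm : ‖m / (L : ℂ)‖ = ‖m‖ / L := by
      rw [norm_div, Complex.norm_real, Real.norm_eq_abs, abs_of_pos hL0]
    rw [hnorm]
    have hsq : L ^ ((1:ℝ)/2) = Real.sqrt L := (Real.sqrt_eq_rpow L).symm
    rw [hsq]
    have hs0 : 0 < Real.sqrt L := Real.sqrt_pos.mpr hL0
    have hLsq : Real.sqrt L * Real.sqrt L = L := Real.mul_self_sqrt hL0.le
    rcases eq_or_lt_of_le (norm_nonneg m) with hm0 | hm0
    · rw [← hm0]; simp; positivity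
    · have h4 : 4 * ‖m‖ / r ≤ Real.sqrt L := by
        have : (4 * ‖m‖ / r) ^ 2 ≤ L := le_max_right _ _
        have h5 : Real.sqrt ((4 * ‖m‖ / r) ^ 2) ≤ Real.sqrt L := Real.sqrt_le_sqrt this
        rwa [Real.sqrt_sq (by positivity)] at h5
      have h4' : 4 * ‖m‖ ≤ Real.sqrt L * r := by
        rw [div_le_iff₀ hr] at h4; linarith
      rw [div_mul_eq_mul_div, div_le_iff₀ hL0]
      nlinarith [mul_le_mul_of_nonneg_right h4' hs0.le, hLsq]
  calc dist F (hq2.toLp q) ≤ dist F uL + dist uL (hq2.toLp q) := dist_triangle _ _ _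
    _ ≤ r / 4 + r / 4 := add_le_add d1 d2
    _ < r := by linarith

theorem stmt12 (φ ψ : ℝ → ℂ)
    (hφ : MemLp φ 2 (volume : Measure ℝ)) (hψ : MemLp ψ 2 (volume : Measure ℝ)) :
    -- `A` is densely defined
    Dense DomA ∧
    -- and its adjoint is exactly `(D*, A*)`
    ∀ g h : Lp ℂ 2 (volume : Measure ℝ),
      ((∀ f ∈ DomA,
          ip (fun x : ℝ => (x : ℂ) * f x + ip (⇑f) φ * ψ x) (⇑g) = ip (⇑f) (⇑h)) ↔
        (∃ c : ℂ, MemLp (fun x : ℝ => (x : ℂ) * g x - c) 2 (volume : Measure ℝ) ∧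
          (h : ℝ → ℂ) =ᵐ[(volume : Measure ℝ)]
            fun x : ℝ => ((x : ℂ) * g x - c) + ip (⇑g) ψ * φ x)) := by
  constructor
  · exact dense_domA
  · intro g h
    constructor
    · exact fun H => forward φ ψ hφ hψ g h H
    · rintro ⟨c, hc, hh⟩ f hf
      exact backward φ ψ hφ hψ g h c hc hh f hf
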